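/- arXiv:1303.5697 — 4 statements merged into one kernel-verified Lean document; each statement's English description precedes it below -/
import Mathlib

section
/- Let J be a B(H)-ideal and 𝒮 ⊆ J. Then span_ℂ({AX : A ∈ J, X ∈ 𝒮} ∪ {XA : A ∈ J, X ∈ 𝒮}) + J(𝒮)J is a J-ideal, and one has the inclusions J(𝒮)J ⊆ span_ℂ({AX : A ∈ J, X ∈ 𝒮} ∪ {XA : A ∈ J, X ∈ 𝒮}) + J(𝒮)J ⊆ (𝒮)_J, where J(𝒮)J is the set of finite sums Σ A_iX_iB_i with A_i, B_i ∈ J and X_i ∈ (𝒮). -/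
set_option linter.unusedSectionVars false
set_option linter.unusedVariables false


open Pointwise

variable {H : Type*} [NormedAddCommGroup H] [InnerProductSpace ℂ H] [CompleteSpace H]
  [TopologicalSpace.SeparableSpace H]

/-- A `B(H)`-ideal: a two-sided ideal of the algebra `B(H)` of bounded operators on `H`. -/
def IsBHIdeal (J : Set (H →L[ℂ] H)) : Prop :=
  0 ∈ J ∧ (∀ x ∈ J, ∀ y ∈ J, x + y ∈ J) ∧
    (∀ (A : H →L[ℂ] H), ∀ x ∈ J, A * x ∈ J) ∧
    (∀ (A : H →L[ℂ] H), ∀ x ∈ J, x * A ∈ J)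

/-- `I` is a `J`-ideal (a subideal): a `ℂ`-linear subspace of `B(H)` contained in `J` that is
closed under left and right multiplication by elements of `J`. -/
def IsSubideal (J I : Set (H →L[ℂ] H)) : Prop :=
  I ⊆ J ∧ 0 ∈ I ∧ (∀ x ∈ I, ∀ y ∈ I, x + y ∈ I) ∧
    (∀ (c : ℂ), ∀ x ∈ I, c • x ∈ I) ∧
    (∀ A ∈ J, ∀ x ∈ I, A * x ∈ I ∧ x * A ∈ I)

/-- `(𝒮)_J`, the smallest `J`-ideal containing the set `𝒮`. -/
def subidealGen (J 𝒮 : Set (H →L[ℂ] H)) : Set (H →L[ℂ] H) :=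
  ⋂₀ {I | IsSubideal J I ∧ 𝒮 ⊆ I}

/-- `(𝒮)`, the smallest `B(H)`-ideal containing the set `𝒮`. -/
def idealGen (𝒮 : Set (H →L[ℂ] H)) : Set (H →L[ℂ] H) :=
  ⋂₀ {I | IsBHIdeal I ∧ 𝒮 ⊆ I}

/-- The product `IJ` of two ideals: the set of finite sums `Σ Xᵢ Yᵢ` with `Xᵢ ∈ I`, `Yᵢ ∈ J`. -/
def idealProd (I J : Set (H →L[ℂ] H)) : Set (H →L[ℂ] H) :=
  {T | ∃ (n : ℕ) (X Y : Fin n → (H →L[ℂ] H)),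
    (∀ i, X i ∈ I) ∧ (∀ i, Y i ∈ J) ∧ T = ∑ i, X i * Y i}

/-- `J(𝒮)J`: the set of finite sums `Σ Aᵢ Xᵢ Bᵢ` with `Aᵢ, Bᵢ ∈ J` and `Xᵢ ∈ (𝒮)`. -/
def JSJ (J 𝒮 : Set (H →L[ℂ] H)) : Set (H →L[ℂ] H) :=
  {T | ∃ (n : ℕ) (A X B : Fin n → (H →L[ℂ] H)),
    (∀ i, A i ∈ J) ∧ (∀ i, B i ∈ J) ∧ (∀ i, X i ∈ idealGen 𝒮) ∧
    T = ∑ i, A i * X i * B i}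

/-- `U_J(H)`: the unitaries of the form `1 + A` with `A ∈ J`. -/
def unitaryJ (J : Set (H →L[ℂ] H)) : Set (H →L[ℂ] H) :=
  {U | U ∈ unitary (H →L[ℂ] H) ∧ U - 1 ∈ J}


section Aux

variable {J 𝒮 I : Set (H →L[ℂ] H)}

lemma IsBHIdeal.smul_mem (hJ : IsBHIdeal J) (c : ℂ) {x : H →L[ℂ] H} (hx : x ∈ J) :
    c • x ∈ J := by
  have := hJ.2.2.1 (c • 1) x hx
  simpa [smul_mul_assoc] using this

lemma IsBHIdeal.sum_mem (hJ : IsBHIdeal J) {n : ℕ} {f : Fin n → (H →L[ℂ] H)}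
    (hf : ∀ i, f i ∈ J) : ∑ i, f i ∈ J :=
  Finset.sum_induction f (· ∈ J) (fun a b ha hb => hJ.2.1 a ha b hb) hJ.1 (fun i _ => hf i)

lemma mem_idealGen_self (hX : ∀ x ∈ 𝒮, x ∈ 𝒮) : 𝒮 ⊆ idealGen 𝒮 :=
  fun x hx I hI => hI.2 hx

lemma idealGen_smul (c : ℂ) {X : H →L[ℂ] H} (hX : X ∈ idealGen 𝒮) :
    c • X ∈ idealGen 𝒮 :=
  fun I hI => hI.1.smul_mem c (hX I hI)

/-- Representation of elements of `idealGen 𝒮` as finite sums `Σ Aᵢ Xᵢ Bᵢ` with `Xᵢ ∈ 𝒮`. -/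
lemma idealGen_rep {X : H →L[ℂ] H} (hX : X ∈ idealGen 𝒮) :
    ∃ (n : ℕ) (A Y B : Fin n → (H →L[ℂ] H)),
      (∀ i, Y i ∈ 𝒮) ∧ X = ∑ i, A i * Y i * B i := by
  set G : Set (H →L[ℂ] H) :=
    {T | ∃ (n : ℕ) (A Y B : Fin n → (H →L[ℂ] H)),
      (∀ i, Y i ∈ 𝒮) ∧ T = ∑ i, A i * Y i * B i} with hG
  have hGmem : IsBHIdeal G ∧ 𝒮 ⊆ G := by
    constructor
    · refine ⟨⟨0, Fin.elim0, Fin.elim0, Fin.elim0, fun i => i.elim0, by simp⟩, ?_, ?_, ?_⟩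
      · rintro x ⟨n, A, Y, B, hY, rfl⟩ y ⟨m, A', Y', B', hY', rfl⟩
        refine ⟨n + m, Fin.append A A', Fin.append Y Y', Fin.append B B', ?_, ?_⟩
        · intro i
          refine Fin.addCases (fun j => ?_) (fun j => ?_) i
          · simpa [Fin.append_left] using hY j
          · simpa [Fin.append_right] using hY' j
        · rw [Fin.sum_univ_add]
          simp [Fin.append_left, Fin.append_right]
      · rintro C x ⟨n, A, Y, B, hY, rfl⟩
        refine ⟨n, fun i => C * A i, Y, B, hY, ?_⟩
        rw [Finset.mul_sum]
        exact Finset.sum_congr rfl fun i _ => by noncomm_ring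
      · rintro C x ⟨n, A, Y, B, hY, rfl⟩
        refine ⟨n, A, Y, fun i => B i * C, hY, ?_⟩
        rw [Finset.sum_mul]
        exact Finset.sum_congr rfl fun i _ => by noncomm_ring
    · intro x hx
      exact ⟨1, fun _ => 1, fun _ => x, fun _ => 1, fun _ => hx, by simp⟩
  exact hX G hGmem

lemma JSJ_zero : (0 : H →L[ℂ] H) ∈ JSJ J 𝒮 :=
  ⟨0, Fin.elim0, Fin.elim0, Fin.elim0, fun i => i.elim0, fun i => i.elim0,
    fun i => i.elim0, by simp⟩

lemma JSJ_add {x y : H →L[ℂ] H} (hx : x ∈ JSJ J 𝒮) (hy : y ∈ JSJ J 𝒮) :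
    x + y ∈ JSJ J 𝒮 := by
  obtain ⟨n, A, X, B, hA, hB, hXm, rfl⟩ := hx
  obtain ⟨m, A', X', B', hA', hB', hXm', rfl⟩ := hy
  refine ⟨n + m, Fin.append A A', Fin.append X X', Fin.append B B', ?_, ?_, ?_, ?_⟩
  · intro i
    refine Fin.addCases (fun j => ?_) (fun j => ?_) i
    · simpa [Fin.append_left] using hA j
    · simpa [Fin.append_right] using hA' j
  · intro i
    refine Fin.addCases (fun j => ?_) (fun j => ?_) i
    · simpa [Fin.append_left] using hB j
    · simpa [Fin.append_right] using hB' j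
  · intro i
    refine Fin.addCases (fun j => ?_) (fun j => ?_) i
    · simpa [Fin.append_left] using hXm j
    · simpa [Fin.append_right] using hXm' j
  · rw [Fin.sum_univ_add]
    simp [Fin.append_left, Fin.append_right]

lemma JSJ_smul (c : ℂ) {x : H →L[ℂ] H} (hx : x ∈ JSJ J 𝒮) : c • x ∈ JSJ J 𝒮 := by
  obtain ⟨n, A, X, B, hA, hB, hXm, rfl⟩ := hx
  refine ⟨n, A, fun i => c • X i, B, hA, hB, fun i => idealGen_smul c (hXm i), ?_⟩
  rw [Finset.smul_sum]
  exact Finset.sum_congr rfl fun i _ => by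
    simp [mul_smul_comm, smul_mul_assoc]

lemma JSJ_mul_left (hJ : IsBHIdeal J) (C : H →L[ℂ] H) {x : H →L[ℂ] H}
    (hx : x ∈ JSJ J 𝒮) : C * x ∈ JSJ J 𝒮 := by
  obtain ⟨n, A, X, B, hA, hB, hXm, rfl⟩ := hx
  refine ⟨n, fun i => C * A i, X, B, fun i => hJ.2.2.1 C (A i) (hA i), hB, hXm, ?_⟩
  rw [Finset.mul_sum]
  exact Finset.sum_congr rfl fun i _ => by noncomm_ring

lemma JSJ_mul_right (hJ : IsBHIdeal J) (C : H →L[ℂ] H) {x : H →L[ℂ] H}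
    (hx : x ∈ JSJ J 𝒮) : x * C ∈ JSJ J 𝒮 := by
  obtain ⟨n, A, X, B, hA, hB, hXm, rfl⟩ := hx
  refine ⟨n, A, X, fun i => B i * C, hA, fun i => hJ.2.2.2 C (B i) (hB i), hXm, ?_⟩
  rw [Finset.sum_mul]
  exact Finset.sum_congr rfl fun i _ => by noncomm_ring

lemma JSJ_subset (hJ : IsBHIdeal J) : JSJ J 𝒮 ⊆ J := by
  rintro x ⟨n, A, X, B, hA, hB, hXm, rfl⟩
  exact hJ.sum_mem fun i => hJ.2.2.1 (A i * X i) (B i) (hB i)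

/-- `JSJ J 𝒮` as a submodule. -/
def JSJsub (J 𝒮 : Set (H →L[ℂ] H)) : Submodule ℂ (H →L[ℂ] H) where
  carrier := JSJ J 𝒮
  zero_mem' := JSJ_zero
  add_mem' := JSJ_add
  smul_mem' c x hx := JSJ_smul c hx

/-- A subideal, viewed as a submodule. -/
def subSub (hI : IsSubideal J I) : Submodule ℂ (H →L[ℂ] H) where
  carrier := I
  zero_mem' := hI.2.1
  add_mem' hx hy := hI.2.2.1 _ hx _ hy
  smul_mem' c x hx := hI.2.2.2.1 c x hx

/-- Key: `J (𝒮) J ⊆ I` for every subideal `I` of `J` containing `𝒮`. -/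
lemma JSJ_subset_subideal (hJ : IsBHIdeal J) (hI : IsSubideal J I) (hS : 𝒮 ⊆ I) :
    JSJ J 𝒮 ⊆ I := by
  rintro x ⟨n, A, X, B, hA, hB, hXm, rfl⟩
  have hterm : ∀ i, A i * X i * B i ∈ I := by
    intro i
    obtain ⟨m, A', Y, B', hY, hrep⟩ := idealGen_rep (hXm i)
    have : A i * X i * B i = ∑ j, (A i * A' j) * Y j * (B' j * B i) := by
      rw [hrep, Finset.mul_sum, Finset.sum_mul]
      exact Finset.sum_congr rfl fun j _ => by noncomm_ring
    rw [this]
    refine Submodule.sum_mem (subSub hI) fun j _ => ?_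
    have h1 : A i * A' j ∈ J := hJ.2.2.2 (A' j) (A i) (hA i)
    have h2 : B' j * B i ∈ J := hJ.2.2.1 (B' j) (B i) (hB i)
    have h3 : (A i * A' j) * Y j ∈ I := (hI.2.2.2.2 _ h1 _ (hS (hY j))).1
    exact (hI.2.2.2.2 _ h2 _ h3).2
  exact Submodule.sum_mem (subSub hI) fun i _ => hterm i

end Aux

/-- `span(J𝒮 ∪ 𝒮J) + J(𝒮)J` is a `J`-ideal sandwiched between `J(𝒮)J`
and `(𝒮)_J`. -/
theorem middle_subideal (J 𝒮 : Set (H →L[ℂ] H)) (hJ : IsBHIdeal J)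
    (hinf : ¬FiniteDimensional ℂ H) (h𝒮 : 𝒮 ⊆ J) :
    IsSubideal J
        (((Submodule.span ℂ
            ({T | ∃ A ∈ J, ∃ X ∈ 𝒮, T = A * X} ∪
              {T | ∃ A ∈ J, ∃ X ∈ 𝒮, T = X * A}) : Submodule ℂ (H →L[ℂ] H)) :
            Set (H →L[ℂ] H)) + JSJ J 𝒮) ∧
      JSJ J 𝒮 ⊆
        ((Submodule.span ℂ
            ({T | ∃ A ∈ J, ∃ X ∈ 𝒮, T = A * X} ∪
              {T | ∃ A ∈ J, ∃ X ∈ 𝒮, T = X * A}) : Submodule ℂ (H →L[ℂ] H)) :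
            Set (H →L[ℂ] H)) + JSJ J 𝒮 ∧
      ((Submodule.span ℂ
          ({T | ∃ A ∈ J, ∃ X ∈ 𝒮, T = A * X} ∪
            {T | ∃ A ∈ J, ∃ X ∈ 𝒮, T = X * A}) : Submodule ℂ (H →L[ℂ] H)) :
          Set (H →L[ℂ] H)) + JSJ J 𝒮 ⊆ subidealGen J 𝒮 := by
  classical
  set gens : Set (H →L[ℂ] H) :=
    ({T | ∃ A ∈ J, ∃ X ∈ 𝒮, T = A * X} ∪ {T | ∃ A ∈ J, ∃ X ∈ 𝒮, T = X * A}) with hgens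
  set P : Submodule ℂ (H →L[ℂ] H) := Submodule.span ℂ gens ⊔ JSJsub J 𝒮 with hP
  have hcoe : ((Submodule.span ℂ gens : Submodule ℂ (H →L[ℂ] H)) : Set (H →L[ℂ] H))
      + JSJ J 𝒮 = (P : Set (H →L[ℂ] H)) := by
    rw [hP, Submodule.coe_sup]; rfl
  have h𝒮gen : 𝒮 ⊆ idealGen 𝒮 := fun x hx I hI => hI.2 hx
  -- generators are in J
  have hgensJ : gens ⊆ J := by
    rintro T (⟨A, hA, X, hX, rfl⟩ | ⟨A, hA, X, hX, rfl⟩)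
    · exact hJ.2.2.1 A X (h𝒮 hX)
    · exact hJ.2.2.2 A X (h𝒮 hX)
  have hPJ : (P : Set (H →L[ℂ] H)) ⊆ J := by
    intro x hx
    obtain ⟨s, hs, k, hk, rfl⟩ := Submodule.mem_sup.1 hx
    have hsJ : s ∈ J := by
      have : Submodule.span ℂ gens ≤ subSub (J := J)
          ⟨le_refl J, hJ.1, hJ.2.1, fun c x hx => hJ.smul_mem c hx,
            fun A hA x hx => ⟨hJ.2.2.1 A x hx, hJ.2.2.2 A x hx⟩⟩ := by
        rw [Submodule.span_le]; exact hgensJ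
      exact this hs
    exact hJ.2.1 s hsJ k (JSJ_subset hJ hk)
  -- multiplication
  have hmul : ∀ A ∈ J, ∀ x, x ∈ P → A * x ∈ P ∧ x * A ∈ P := by
    intro A hA x hx
    obtain ⟨s, hs, k, hk, rfl⟩ := Submodule.mem_sup.1 hx
    have hsLR : ∀ t, t ∈ Submodule.span ℂ gens → A * t ∈ P ∧ t * A ∈ P := by
      intro t ht
      induction ht using Submodule.span_induction with
      | mem y hy =>
        rcases hy with ⟨A', hA', X, hX, rfl⟩ | ⟨A', hA', X, hX, rfl⟩
        · constructor
          · have h1 : A * (A' * X) = (A * A') * X := by noncomm_ring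
            rw [h1]
            exact le_sup_left (α := Submodule ℂ (H →L[ℂ] H))
              (Submodule.subset_span (Or.inl ⟨A * A', hJ.2.2.1 A A' hA', X, hX, rfl⟩))
          · exact le_sup_right (α := Submodule ℂ (H →L[ℂ] H))
              (show A' * X * A ∈ JSJ J 𝒮 from
                ⟨1, fun _ => A', fun _ => X, fun _ => A, fun _ => hA', fun _ => hA,
                  fun _ => h𝒮gen hX, by simp⟩)
        · constructor
          · have h1 : A * (X * A') = A * X * A' := by noncomm_ring
            rw [h1]
            exact le_sup_right (α := Submodule ℂ (H →L[ℂ] H))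
              (show A * X * A' ∈ JSJ J 𝒮 from
                ⟨1, fun _ => A, fun _ => X, fun _ => A', fun _ => hA, fun _ => hA',
                  fun _ => h𝒮gen hX, by simp⟩)
          · have h1 : (X * A') * A = X * (A' * A) := by noncomm_ring
            rw [h1]
            exact le_sup_left (α := Submodule ℂ (H →L[ℂ] H))
              (Submodule.subset_span (Or.inr ⟨A' * A, hJ.2.2.2 A A' hA', X, hX, rfl⟩))
      | zero => simp
      | add y z _ _ hy hz =>
        exact ⟨by rw [mul_add]; exact P.add_mem hy.1 hz.1,
          by rw [add_mul]; exact P.add_mem hy.2 hz.2⟩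
      | smul c y _ hy =>
        exact ⟨by rw [mul_smul_comm]; exact P.smul_mem c hy.1,
          by rw [smul_mul_assoc]; exact P.smul_mem c hy.2⟩
    constructor
    · rw [mul_add]
      exact P.add_mem (hsLR s hs).1
        (le_sup_right (α := Submodule ℂ (H →L[ℂ] H)) (JSJ_mul_left hJ A hk))
    · rw [add_mul]
      exact P.add_mem (hsLR s hs).2
        (le_sup_right (α := Submodule ℂ (H →L[ℂ] H)) (JSJ_mul_right hJ A hk))
  rw [hcoe]
  refine ⟨⟨hPJ, P.zero_mem, fun x hx y hy => P.add_mem hx hy,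
      fun c x hx => P.smul_mem c hx, hmul⟩, ?_, ?_⟩
  · exact fun x hx => le_sup_right (α := Submodule ℂ (H →L[ℂ] H)) hx
  · intro x hx
    refine Set.mem_sInter.2 ?_
    rintro I ⟨hI, hSI⟩
    have hle : P ≤ subSub hI := by
      refine sup_le ?_ ?_
      · rw [Submodule.span_le]
        rintro T (⟨A, hA, X, hX, rfl⟩ | ⟨A, hA, X, hX, rfl⟩)
        · exact (hI.2.2.2.2 A hA X (hSI hX)).1
        · exact (hI.2.2.2.2 A hA X (hSI hX)).2
      · exact fun k hk => JSJ_subset_subideal hJ hI hSI hk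
    exact hle hx
end

section
/- Let J be a B(H)-ideal, 𝓘 a J-ideal, and A ∈ J such that U := 1 + A is a unitary operator on H. Then U X U* ∈ 𝓘 for every X ∈ 𝓘; that is, 𝓘 is invariant under conjugation by every unitary of the form 1 + A with A ∈ J. -/
open Pointwise

variable {H : Type*} [NormedAddCommGroup H] [InnerProductSpace ℂ H] [CompleteSpace H]
  [TopologicalSpace.SeparableSpace H]

/-- a `J`-ideal is invariant under conjugation by unitaries of the form `1 + A`,
`A ∈ J`. -/
theorem subideal_unitaryJ_invariant (J I : Set (H →L[ℂ] H)) (hJ : IsBHIdeal J)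
    (hinf : ¬FiniteDimensional ℂ H) (hI : IsSubideal J I)
    (A : H →L[ℂ] H) (hA : A ∈ J) (hU : (1 + A) ∈ unitary (H →L[ℂ] H)) :
    ∀ X ∈ I, (1 + A) * X * star (1 + A) ∈ I := by
  obtain ⟨hJ0, hJadd, hJl, hJr⟩ := hJ
  obtain ⟨hIJ, hI0, hIadd, hIsmul, hImul⟩ := hI
  intro X hX
  have hstar : star (1 + A) = 1 + star A := by simp [star_add]
  have hAstar : star A ∈ J := by
    have h1 : star (1 + A) * (1 + A) = 1 := hU.1
    rw [hstar, add_mul, one_mul, mul_add, mul_one] at h1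
    have h2 : star A + (A + star A * A) = 0 := by
      calc star A + (A + star A * A) = 1 + A + (star A + star A * A) - 1 := by abel
        _ = 0 := by rw [h1]; abel
    have h3 : star A = (-1 : H →L[ℂ] H) * (A + star A * A) := by
      rw [neg_one_mul]; exact eq_neg_of_add_eq_zero_left h2
    rw [h3]
    exact hJl _ _ (hJadd _ hA _ (hJl (star A) A hA))
  have hexp : (1 + A) * X * star (1 + A)
      = X + (A * X + (X * star A + A * X * star A)) := by
    rw [hstar]; noncomm_ring
  rw [hexp]
  exact hIadd _ hX _ (hIadd _ (hImul A hA X hX).1 _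
    (hIadd _ (hImul _ hAstar X hX).2 _ (hImul _ hAstar _ (hImul A hA X hX).1).2))
end

section
/- Let J be a B(H)-ideal and S ∈ J such that the smallest J-ideal (S)_J containing S is not a two-sided ideal of B(H). Then (S)_J = ℂS ⊕' N as an internal direct sum of ℂ-subspaces, where N := JS + SJ + J(S)J (with J(S)J the set of finite sums Σ A_iSB_i, A_i, B_i ∈ J); in particular, if αS + X = βS + Y with α, β ∈ ℂ and X, Y ∈ N, then α = β. Consequently the formula τ(αS + X) := α for X ∈ N defines a ℂ-linear functional τ on (S)_J, and τ is a subideal-trace: τ(UYU*) = τ(Y) for every Y ∈ (S)_J and every U ∈ U_J(H). -/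
open Pointwise

variable {H : Type*} [NormedAddCommGroup H] [InnerProductSpace ℂ H] [CompleteSpace H]
  [TopologicalSpace.SeparableSpace H]

/-- `N = JS + SJ + J(S)J` for a single operator `S`. -/
def principalN (J : Set (H →L[ℂ] H)) (S : H →L[ℂ] H) : Set (H →L[ℂ] H) :=
  {T | ∃ A ∈ J, ∃ B ∈ J, ∃ (m : ℕ) (A' B' : Fin m → (H →L[ℂ] H)),
    (∀ i, A' i ∈ J) ∧ (∀ i, B' i ∈ J) ∧ T = A * S + S * B + ∑ i, A' i * S * B' i}


set_option linter.unusedSectionVars false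
set_option maxHeartbeats 1000000

namespace SubTrace

open ContinuousLinearMap Metric


open ContinuousLinearMap

variable (J : Set (H →L[ℂ] H)) (S : H →L[ℂ] H)

def NGens : Set (H →L[ℂ] H) :=
  {T | ∃ A ∈ J, T = A * S} ∪ {T | ∃ B ∈ J, T = S * B} ∪
    {T | ∃ A ∈ J, ∃ B ∈ J, T = A * S * B}

noncomputable def NSub : Submodule ℂ (H →L[ℂ] H) := Submodule.span ℂ (NGens J S)

variable {J S}

lemma smul_mem_J (hJ : IsBHIdeal J) (c : ℂ) {A : H →L[ℂ] H} (hA : A ∈ J) : c • A ∈ J := by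
  have := hJ.2.2.1 (c • 1) A hA
  rwa [smul_mul_assoc, one_mul] at this

lemma AS_mem {A : H →L[ℂ] H} (hA : A ∈ J) : A * S ∈ NSub J S :=
  Submodule.subset_span (Or.inl (Or.inl ⟨A, hA, rfl⟩))

lemma SB_mem {B : H →L[ℂ] H} (hB : B ∈ J) : S * B ∈ NSub J S :=
  Submodule.subset_span (Or.inl (Or.inr ⟨B, hB, rfl⟩))

lemma ASB_mem {A B : H →L[ℂ] H} (hA : A ∈ J) (hB : B ∈ J) : A * S * B ∈ NSub J S :=
  Submodule.subset_span (Or.inr ⟨A, hA, B, hB, rfl⟩)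

lemma NSub_mul_left (hJ : IsBHIdeal J) {T X : H →L[ℂ] H} (hT : T ∈ J) (hX : X ∈ NSub J S) :
    T * X ∈ NSub J S := by
  induction hX using Submodule.span_induction with
  | mem x hx =>
      rcases hx with ((⟨A, hA, rfl⟩ | ⟨B, hB, rfl⟩) | ⟨A, hA, B, hB, rfl⟩)
      · rw [← mul_assoc]; exact AS_mem (hJ.2.2.2 _ _ hT)
      · rw [← mul_assoc]; exact ASB_mem hT hB
      · rw [← mul_assoc, ← mul_assoc]
        exact ASB_mem (hJ.2.2.2 _ _ hT : T * A ∈ J) hB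
  | zero => simp
  | add x y _ _ hx hy => rw [mul_add]; exact add_mem hx hy
  | smul c x _ hx => rw [mul_smul_comm]; exact Submodule.smul_mem _ _ hx

lemma NSub_mul_right (hJ : IsBHIdeal J) {T X : H →L[ℂ] H} (hT : T ∈ J) (hX : X ∈ NSub J S) :
    X * T ∈ NSub J S := by
  induction hX using Submodule.span_induction with
  | mem x hx =>
      rcases hx with ((⟨A, hA, rfl⟩ | ⟨B, hB, rfl⟩) | ⟨A, hA, B, hB, rfl⟩)
      · rw [mul_assoc]; exact ASB_mem hA hT
      · rw [mul_assoc]; exact SB_mem (hJ.2.2.2 T B hB)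
      · rw [mul_assoc, mul_assoc]
        rw [← mul_assoc S B T]
        exact ASB_mem hA (hJ.2.2.2 T B hB)
  | zero => simp
  | add x y _ _ hx hy => rw [add_mul]; exact add_mem hx hy
  | smul c x _ hx => rw [smul_mul_assoc]; exact Submodule.smul_mem _ _ hx

lemma NSub_subset_J (hJ : IsBHIdeal J) (hS : S ∈ J) : (NSub J S : Set (H →L[ℂ] H)) ⊆ J := by
  intro x hx
  induction hx using Submodule.span_induction with
  | mem x hx =>
      rcases hx with ((⟨A, hA, rfl⟩ | ⟨B, hB, rfl⟩) | ⟨A, hA, B, hB, rfl⟩)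
      · exact hJ.2.2.1 _ _ hS
      · exact hJ.2.2.2 _ _ hS
      · exact hJ.2.2.2 _ _ (hJ.2.2.1 _ _ hS)
  | zero => exact hJ.1
  | add x y _ _ hx hy => exact hJ.2.1 _ hx _ hy
  | smul c x _ hx => exact smul_mem_J hJ c hx

lemma principalN_eq (hJ : IsBHIdeal J) : principalN J S = (NSub J S : Set (H →L[ℂ] H)) := by
  apply Set.Subset.antisymm
  · rintro T ⟨A, hA, B, hB, m, A', B', hA', hB', rfl⟩
    exact add_mem (add_mem (AS_mem hA) (SB_mem hB))
      (Submodule.sum_mem _ fun i _ => ASB_mem (hA' i) (hB' i))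
  · let P : Submodule ℂ (H →L[ℂ] H) :=
      { carrier := principalN J S
        zero_mem' := ⟨0, hJ.1, 0, hJ.1, 0, (fun i => i.elim0), (fun i => i.elim0),
          (fun i => i.elim0), (fun i => i.elim0), by simp⟩
        add_mem' := by
          rintro a b ⟨A, hA, B, hB, m, A', B', hA', hB', rfl⟩
            ⟨C, hC, D, hD, n, C', D', hC', hD', rfl⟩
          refine ⟨A + C, hJ.2.1 _ hA _ hC, B + D, hJ.2.1 _ hB _ hD, m + n,
            Fin.append A' C', Fin.append B' D', ?_, ?_, ?_⟩
          · intro i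
            refine Fin.addCases (fun j => ?_) (fun j => ?_) i
            · rw [Fin.append_left]; exact hA' j
            · rw [Fin.append_right]; exact hC' j
          · intro i
            refine Fin.addCases (fun j => ?_) (fun j => ?_) i
            · rw [Fin.append_left]; exact hB' j
            · rw [Fin.append_right]; exact hD' j
          · rw [Fin.sum_univ_add]
            simp only [Fin.append_left, Fin.append_right, add_mul, mul_add]
            abel
        smul_mem' := by
          rintro c a ⟨A, hA, B, hB, m, A', B', hA', hB', rfl⟩
          refine ⟨c • A, smul_mem_J hJ c hA, c • B, smul_mem_J hJ c hB, m,
            (fun i => c • A' i), B', (fun i => smul_mem_J hJ c (hA' i)), hB', ?_⟩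
          simp only [smul_add, smul_mul_assoc, mul_smul_comm, Finset.smul_sum] }
    have hle : NSub J S ≤ P := by
      rw [NSub, Submodule.span_le]
      rintro x ((⟨A, hA, rfl⟩ | ⟨B, hB, rfl⟩) | ⟨A, hA, B, hB, rfl⟩)
      · exact ⟨A, hA, 0, hJ.1, 0, (fun i => i.elim0), (fun i => i.elim0),
          (fun i => i.elim0), (fun i => i.elim0), by simp⟩
      · exact ⟨0, hJ.1, B, hB, 0, (fun i => i.elim0), (fun i => i.elim0),
          (fun i => i.elim0), (fun i => i.elim0), by simp⟩
      · exact ⟨0, hJ.1, 0, hJ.1, 1, (fun _ => A), (fun _ => B),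
          (fun _ => hA), (fun _ => hB), by simp⟩
    exact fun x hx => hle hx

/-- The candidate for `(S)_J`. -/
def Gset (J : Set (H →L[ℂ] H)) (S : H →L[ℂ] H) : Set (H →L[ℂ] H) :=
  {T | ∃ (α : ℂ), ∃ X ∈ principalN J S, T = α • S + X}

lemma mem_Gset_iff (hJ : IsBHIdeal J) {T : H →L[ℂ] H} :
    T ∈ Gset J S ↔ ∃ (α : ℂ), ∃ X ∈ NSub J S, T = α • S + X := by
  unfold Gset; rw [principalN_eq hJ]; rfl

lemma isSubideal_Gset (hJ : IsBHIdeal J) (hS : S ∈ J) : IsSubideal J (Gset J S) := by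
  refine ⟨?_, ?_, ?_, ?_, ?_⟩
  · rintro T ⟨α, X, hX, rfl⟩
    rw [principalN_eq hJ] at hX
    exact hJ.2.1 _ (smul_mem_J hJ α hS) _ (NSub_subset_J hJ hS hX)
  · exact (mem_Gset_iff hJ).2 ⟨0, 0, Submodule.zero_mem _, by simp⟩
  · rintro x ⟨α, X, hX, rfl⟩ y ⟨β, Y, hY, rfl⟩
    rw [principalN_eq hJ] at hX hY
    refine (mem_Gset_iff hJ).2 ⟨α + β, X + Y, add_mem hX hY, by
      rw [add_smul]; abel⟩
  · rintro c x ⟨α, X, hX, rfl⟩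
    rw [principalN_eq hJ] at hX
    exact (mem_Gset_iff hJ).2 ⟨c * α, c • X, Submodule.smul_mem _ _ hX, by
      rw [smul_add, smul_smul]⟩
  · rintro A hA x ⟨α, X, hX, rfl⟩
    rw [principalN_eq hJ] at hX
    constructor
    · refine (mem_Gset_iff hJ).2 ⟨0, α • (A * S) + A * X, ?_, by
        rw [mul_add, mul_smul_comm, zero_smul, zero_add]⟩
      exact add_mem (Submodule.smul_mem _ _ (AS_mem hA)) (NSub_mul_left hJ hA hX)
    · refine (mem_Gset_iff hJ).2 ⟨0, α • (S * A) + X * A, ?_, by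
        rw [add_mul, smul_mul_assoc, zero_smul, zero_add]⟩
      exact add_mem (Submodule.smul_mem _ _ (SB_mem hA)) (NSub_mul_right hJ hA hX)

lemma S_mem_Gset (hJ : IsBHIdeal J) : S ∈ Gset J S :=
  ⟨1, 0, ⟨0, hJ.1, 0, hJ.1, 0, (fun i => i.elim0), (fun i => i.elim0),
    (fun i => i.elim0), (fun i => i.elim0), by simp⟩, by simp⟩

lemma genEq (hJ : IsBHIdeal J) (hS : S ∈ J) : subidealGen J {S} = Gset J S := by
  apply Set.Subset.antisymm
  · intro x hx
    exact hx (Gset J S) ⟨isSubideal_Gset hJ hS, by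
      intro y hy; rw [Set.mem_singleton_iff] at hy; subst hy; exact S_mem_Gset hJ⟩
  · rintro x ⟨α, X, hX, rfl⟩ I hI
    obtain ⟨⟨hIJ, hI0, hIadd, hIsmul, hImul⟩, hSI⟩ := hI
    have hSmem : S ∈ I := hSI rfl
    -- I as a submodule
    let I' : Submodule ℂ (H →L[ℂ] H) :=
      { carrier := I
        zero_mem' := hI0
        add_mem' := fun ha hb => hIadd _ ha _ hb
        smul_mem' := fun c a ha => hIsmul c a ha }
    have hNI : NSub J S ≤ I' := by
      rw [NSub, Submodule.span_le]
      rintro y ((⟨A, hA, rfl⟩ | ⟨B, hB, rfl⟩) | ⟨A, hA, B, hB, rfl⟩)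
      · exact (hImul A hA S hSmem).1
      · exact (hImul B hB S hSmem).2
      · exact (hImul B hB _ (hImul A hA S hSmem).1).2
    rw [principalN_eq hJ] at hX
    exact hIadd _ (hIsmul α S hSmem) _ (hNI hX)

lemma uniqueness_of_not_mem (hJ : IsBHIdeal J) (hSN : S ∉ NSub J S) :
    ∀ (α β : ℂ) (X Y : H →L[ℂ] H), X ∈ principalN J S → Y ∈ principalN J S →
      α • S + X = β • S + Y → α = β := by
  intro α β X Y hX hY hEq
  rw [principalN_eq hJ] at hX hY
  by_contra hne
  have h1 : (α - β) • S = Y - X := by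
    rw [sub_smul]
    exact sub_eq_sub_iff_add_eq_add.2 (by rw [hEq, add_comm])
  have h2 : S = (α - β)⁻¹ • (Y - X) := by
    rw [← h1, smul_smul, inv_mul_cancel₀ (sub_ne_zero.2 hne), one_smul]
  have h3 : (α - β)⁻¹ • (Y - X) ∈ NSub J S := Submodule.smul_mem _ _ (sub_mem hY hX)
  rw [← h2] at h3
  exact hSN h3

section RankOne

/-- rank one operator `x ↦ ⟪v,x⟫ u`. -/
noncomputable def rankOne (u v : H) : H →L[ℂ] H := (innerSL ℂ v).smulRight u

lemma rankOne_apply (u v x : H) : rankOne u v x = (inner ℂ v x : ℂ) • u := rfl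

lemma comp_rankOne (M : H →L[ℂ] H) (u v : H) : M * rankOne u v = rankOne (M u) v := by
  ext x
  simp only [ContinuousLinearMap.mul_apply, rankOne_apply, map_smul]

lemma rankOne_comp (u v : H) (M : H →L[ℂ] H) : rankOne u v * M = rankOne u (adjoint M v) := by
  ext x
  simp only [ContinuousLinearMap.mul_apply, rankOne_apply, adjoint_inner_left]

lemma adjoint_rankOne (u v : H) : adjoint (rankOne u v) = rankOne v u := by
  ext x
  apply ext_inner_right ℂ
  intro y
  rw [adjoint_inner_left]
  simp only [rankOne_apply, inner_smul_left, inner_smul_right]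
  rw [inner_conj_symm]
  ring

lemma exists_ne_zero {S : H →L[ℂ] H} (hS0 : S ≠ 0) : ∃ x, S x ≠ 0 := by
  by_contra h
  push_neg at h
  exact hS0 (by ext y; simp [h y])

/-- Explicit factorization of a rank one operator through `S`. -/
lemma rankOne_factor {S : H →L[ℂ] H} {x : H} (hx : S x ≠ 0) (u v : H) :
    ((‖S x‖^2 : ℂ)⁻¹ • rankOne u (S x)) * S * rankOne x v = rankOne u v := by
  ext y
  simp only [ContinuousLinearMap.mul_apply, rankOne_apply, ContinuousLinearMap.smul_apply, map_smul]
  rw [inner_self_eq_norm_sq_to_K (𝕜 := ℂ)]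
  rw [smul_smul, smul_smul]
  have hn : ((‖S x‖:ℂ)^2) ≠ 0 := by
    simp only [ne_eq, pow_eq_zero_iff, Complex.ofReal_eq_zero, norm_eq_zero]
    exact fun h => hx (by simpa using h)
  congr 1
  field_simp
  exact mul_div_cancel_right₀ _ hn

lemma rankOne_mem_J (hJ : IsBHIdeal J) (hS : S ∈ J) (hS0 : S ≠ 0) (u v : H) :
    rankOne u v ∈ J := by
  obtain ⟨x, hx⟩ := exists_ne_zero hS0
  rw [← rankOne_factor hx u v]
  exact hJ.2.2.2 _ _ (hJ.2.2.1 _ _ hS)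

lemma rankOne_mem_NSub (hJ : IsBHIdeal J) (hS : S ∈ J) (hS0 : S ≠ 0) (u v : H) :
    rankOne u v ∈ NSub J S := by
  obtain ⟨x, hx⟩ := exists_ne_zero hS0
  rw [← rankOne_factor hx u v]
  exact ASB_mem (smul_mem_J hJ _ (rankOne_mem_J hJ hS hS0 u (S x))) (rankOne_mem_J hJ hS hS0 x v)

end RankOne



lemma norm_apply_sq_le' (B : H →L[ℂ] H) (w : H) :
    ‖B w‖ ^ 2 ≤ ‖(adjoint B * B) w‖ * ‖w‖ := by
  have h1 : (‖B w‖ : ℝ) ^ 2 = RCLike.re (inner ℂ (B w) (B w) : ℂ) := (inner_self_eq_norm_sq _).symm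
  have h2 : (inner ℂ (B w) (B w) : ℂ) = inner ℂ ((adjoint B * B) w) w := by
    rw [ContinuousLinearMap.mul_apply, adjoint_inner_left]
  rw [h1, h2]
  calc RCLike.re (inner ℂ ((adjoint B * B) w) w : ℂ) ≤ ‖(inner ℂ ((adjoint B * B) w) w : ℂ)‖ :=
        RCLike.re_le_norm _
    _ ≤ ‖(adjoint B * B) w‖ * ‖w‖ := norm_inner_le_norm _ _

lemma isCompactOperator_of_adjoint_mul_self {B : H →L[ℂ] H}
    (h : IsCompactOperator ⇑(adjoint B * B)) : IsCompactOperator ⇑B := by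
  refine (isCompactOperator_iff_isCompact_closure_image_closedBall
    (B.toLinearMap) one_pos).mpr ?_
  apply TotallyBounded.isCompact_of_isClosed _ isClosed_closure
  apply TotallyBounded.closure
  rw [Metric.totallyBounded_iff]
  intro ε hε
  have hP : TotallyBounded ((adjoint B * B) '' closedBall 0 1) :=
    ((h : IsCompactOperator ⇑((adjoint B * B).toLinearMap)).isCompact_closure_image_closedBall
      1).totallyBounded.subset subset_closure
  rw [Metric.totallyBounded_iff] at hP
  obtain ⟨t, ht, hcov⟩ := hP (ε ^ 2 / 8) (by positivity)
  classical
  -- for each y in t that is hit, choose a preimage point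
  let pick : H → H := fun y =>
    if hy : ∃ x ∈ closedBall (0:H) 1, (adjoint B * B) x ∈ ball y (ε ^ 2 / 8) then hy.choose else 0
  refine ⟨B '' (pick '' t), (ht.image _).image _, ?_⟩
  rintro z ⟨x, hx, rfl⟩
  have hPx := hcov ⟨x, hx, rfl⟩
  simp only [Set.mem_iUnion] at hPx
  obtain ⟨y, hyt, hPxy⟩ := hPx
  have hy : ∃ x ∈ closedBall (0:H) 1, (adjoint B * B) x ∈ ball y (ε ^ 2 / 8) := ⟨x, hx, hPxy⟩
  have hpick : pick y = hy.choose := dif_pos hy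
  obtain ⟨hx2, hPx2⟩ := hy.choose_spec
  set x' := hy.choose
  have hdist : ‖(adjoint B * B) (x - x')‖ < ε ^ 2 / 4 := by
    have := dist_triangle ((adjoint B * B) x) y ((adjoint B * B) x')
    rw [map_sub]
    rw [mem_ball] at hPxy hPx2
    calc ‖(adjoint B * B) x - (adjoint B * B) x'‖ = dist ((adjoint B * B) x) ((adjoint B * B) x') :=
          (dist_eq_norm _ _).symm
      _ ≤ dist ((adjoint B * B) x) y + dist y ((adjoint B * B) x') := this
      _ < ε ^ 2 / 8 + ε ^ 2 / 8 := by
          rw [dist_comm y] at *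
          exact add_lt_add hPxy hPx2
      _ = ε ^ 2 / 4 := by ring
  have hxx' : ‖x - x'‖ ≤ 2 := by
    rw [mem_closedBall, dist_zero_right] at hx hx2
    calc ‖x - x'‖ ≤ ‖x‖ + ‖x'‖ := norm_sub_le _ _
      _ ≤ 2 := by linarith
  have hB2 : ‖B x - B x'‖ ^ 2 < ε ^ 2 := by
    have := norm_apply_sq_le' B (x - x')
    rw [map_sub] at this
    calc ‖B x - B x'‖ ^ 2 ≤ ‖(adjoint B * B) (x - x')‖ * ‖x - x'‖ := this
      _ ≤ ‖(adjoint B * B) (x - x')‖ * 2 := by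
          apply mul_le_mul_of_nonneg_left hxx' (norm_nonneg _)
      _ < ε ^ 2 / 4 * 2 := by
          apply mul_lt_mul_of_pos_right hdist (by norm_num)
      _ < ε ^ 2 := by nlinarith [sq_nonneg ε, hε]
  have hBfin : ‖B x - B x'‖ < ε := by
    nlinarith [norm_nonneg (B x - B x'), hε]
  simp only [Set.mem_iUnion]
  exact ⟨B (pick y), ⟨pick y, ⟨y, hyt, rfl⟩, rfl⟩, by
    rw [mem_ball, dist_eq_norm, hpick]; exact hBfin⟩

lemma isCompactOperator_adjoint {K : H →L[ℂ] H} (h : IsCompactOperator ⇑K) :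
    IsCompactOperator ⇑(adjoint K) := by
  apply isCompactOperator_of_adjoint_mul_self
  have : (adjoint (adjoint K) * adjoint K) = K * adjoint K := by rw [adjoint_adjoint]
  rw [this]
  have : ⇑(K * adjoint K) = ⇑K ∘ ⇑(adjoint K) := rfl
  rw [this]
  exact h.comp_clm _

lemma isCompactOperator_of_mem_finiteDimensional {T : H →L[ℂ] H} {W : Submodule ℂ H}
    [FiniteDimensional ℂ ↥W] (hT : ∀ x, T x ∈ W) : IsCompactOperator ⇑T := by
  refine ⟨Subtype.val '' (closedBall (0 : ↥W) (‖T‖ + 1)), ?_, ?_⟩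
  · exact (isCompact_closedBall _ _).image continuous_subtype_val
  · refine Filter.mem_of_superset (ball_mem_nhds 0 one_pos) ?_
    intro x hx
    rw [mem_ball, dist_zero_right] at hx
    refine ⟨⟨T x, hT x⟩, ?_, rfl⟩
    rw [mem_closedBall, dist_zero_right]
    calc ‖(⟨T x, hT x⟩ : ↥W)‖ = ‖T x‖ := rfl
      _ ≤ ‖T‖ * ‖x‖ := le_opNorm T x
      _ ≤ ‖T‖ * 1 := by
          apply mul_le_mul_of_nonneg_left (le_of_lt hx) (norm_nonneg _)
      _ ≤ ‖T‖ + 1 := by linarith [norm_nonneg T]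


lemma finiteDimensional_ker_one_sub {K : H →L[ℂ] H} (hK : IsCompactOperator ⇑K) :
    FiniteDimensional ℂ ↥((1 - K : H →L[ℂ] H).ker) := by
  set E₀ := (1 - K : H →L[ℂ] H).ker
  have hfix : ∀ x ∈ E₀, K x = x := by
    intro x hx
    have : (1 - K) x = 0 := hx
    rw [ContinuousLinearMap.sub_apply, ContinuousLinearMap.one_apply, sub_eq_zero] at this
    exact this.symm
  set C := closure (⇑K '' closedBall 0 1) with hC
  have hCcpt : IsCompact C :=
    (hK : IsCompactOperator ⇑(K.toLinearMap)).isCompact_closure_image_closedBall 1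
  set A := Subtype.val '' (closedBall (0 : ↥E₀) 1) with hA
  have hAC : A ⊆ C := by
    rintro _ ⟨⟨x, hx⟩, hx1, rfl⟩
    refine subset_closure ⟨x, ?_, hfix x hx⟩
    simpa [mem_closedBall, dist_zero_right] using hx1
  have hAclosed : IsClosed A := by
    have : A = (E₀ : Set H) ∩ closedBall 0 1 := by
      ext y
      constructor
      · rintro ⟨⟨x, hx⟩, hx1, rfl⟩
        exact ⟨hx, by simpa [mem_closedBall] using hx1⟩
      · rintro ⟨hy, hy1⟩
        exact ⟨⟨y, hy⟩, by simpa [mem_closedBall] using hy1, rfl⟩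
    rw [this]
    exact (isClosed_ker _ : IsClosed (E₀ : Set H)).inter Metric.isClosed_closedBall
  have hAcpt : IsCompact A := hCcpt.of_isClosed_subset hAclosed hAC
  have hball : IsCompact (closedBall (0 : ↥E₀) 1) := by
    rw [Topology.IsEmbedding.subtypeVal.isCompact_iff]
    exact hAcpt
  exact FiniteDimensional.of_isCompact_closedBall₀ ℂ (by norm_num : (0:ℝ) < 1) hball

lemma exists_bound_below {K : H →L[ℂ] H} (hK : IsCompactOperator ⇑K) :
    ∃ c : ℝ, 0 < c ∧ ∀ x ∈ ((1 - K : H →L[ℂ] H).ker)ᗮ,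
      c * ‖x‖ ≤ ‖(1 - K) x‖ := by
  set E₀ := (1 - K : H →L[ℂ] H).ker
  by_contra hcon
  push_neg at hcon
  have hseq : ∀ n : ℕ, ∃ u : H, u ∈ E₀ᗮ ∧ ‖u‖ = 1 ∧ ‖(1 - K) u‖ < 1 / (n + 1) := by
    intro n
    obtain ⟨x, hxO, hxlt⟩ := hcon (1 / (n + 1)) (by positivity)
    have hx0 : x ≠ 0 := by
      rintro rfl
      simp at hxlt
    refine ⟨‖x‖⁻¹ • x, Submodule.smul_mem _ _ hxO, ?_, ?_⟩
    · rw [norm_smul, norm_inv, norm_norm, inv_mul_cancel₀ (norm_ne_zero_iff.2 hx0)]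
    · rw [map_smul_of_tower, norm_smul, norm_inv, norm_norm]
      rw [inv_mul_lt_iff₀ (norm_pos_iff.2 hx0)]
      calc ‖(1 - K) x‖ < 1 / (n + 1) * ‖x‖ := hxlt
        _ = ‖x‖ * (1 / (n+1)) := by ring
  choose u huO hu1 hulim using hseq
  set C := closure (⇑K '' closedBall 0 1) with hC
  have hCcpt : IsCompact C :=
    (hK : IsCompactOperator ⇑(K.toLinearMap)).isCompact_closure_image_closedBall 1
  have hmem : ∀ n, K (u n) ∈ C := by
    intro n
    exact subset_closure ⟨u n, by simp [mem_closedBall, hu1 n], rfl⟩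
  obtain ⟨y, hyC, φ, hφ, hconv⟩ := hCcpt.tendsto_subseq hmem
  have hzero : Filter.Tendsto (fun n => (1 - K) (u (φ n))) Filter.atTop (nhds 0) := by
    rw [tendsto_zero_iff_norm_tendsto_zero]
    apply squeeze_zero (fun n => norm_nonneg _) (fun n => le_of_lt (hulim (φ n)))
    have h1 : Filter.Tendsto (fun n : ℕ => 1 / ((n:ℝ) + 1)) Filter.atTop (nhds 0) :=
      tendsto_one_div_add_atTop_nhds_zero_nat
    apply squeeze_zero (fun n => by positivity) _ h1
    intro n
    apply one_div_le_one_div_of_le (by positivity)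
    have := hφ.le_apply (x := n)
    exact_mod_cast by linarith [this]
  have huconv : Filter.Tendsto (fun n => u (φ n)) Filter.atTop (nhds y) := by
    have : (fun n => u (φ n)) = fun n => (1 - K) (u (φ n)) + K (u (φ n)) := by
      funext n
      rw [ContinuousLinearMap.sub_apply, ContinuousLinearMap.one_apply]
      abel
    rw [this]
    simpa using hzero.add hconv
  have hy1 : ‖y‖ = 1 := by
    have := (continuous_norm.tendsto y).comp huconv
    have h2 : Filter.Tendsto (fun n => ‖u (φ n)‖) Filter.atTop (nhds 1) := by
      simpa [hu1] using Filter.tendsto_const_nhds (x := (1:ℝ))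
    exact tendsto_nhds_unique ((continuous_norm.tendsto y).comp huconv) h2
  have hyO : y ∈ E₀ᗮ := by
    have hclosed : IsClosed (E₀ᗮ : Set H) := Submodule.isClosed_orthogonal E₀
    exact hclosed.mem_of_tendsto huconv (Filter.Eventually.of_forall (fun n => huO (φ n)))
  have hyker : y ∈ E₀ := by
    have h1 : Filter.Tendsto (fun n => (1 - K) (u (φ n))) Filter.atTop (nhds ((1 - K) y)) :=
      ((1 - K).continuous.tendsto y).comp huconv
    have h2 : (1 - K) y = 0 := tendsto_nhds_unique h1 hzero
    exact h2
  have : y = 0 := by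
    have := Submodule.inner_right_of_mem_orthogonal hyker hyO
    rwa [inner_self_eq_zero] at this
  rw [this] at hy1
  simp at hy1

lemma fredholm_regularizer {K : H →L[ℂ] H} (hK : IsCompactOperator ⇑K) :
    ∃ R F : H →L[ℂ] H, (1 - K) * R = 1 - F ∧
      ∃ (n : ℕ) (u : Fin n → H), F = ∑ i, rankOne (u i) (u i) := by
  classical
  set T : H →L[ℂ] H := 1 - K with hT
  set E₀ := T.ker with hE₀
  haveI : FiniteDimensional ℂ ↥E₀ := finiteDimensional_ker_one_sub hK
  set O := E₀ᗮ with hO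
  haveI : CompleteSpace ↥O := (Submodule.isClosed_orthogonal E₀).completeSpace_coe
  obtain ⟨c, hc, hbound⟩ := exists_bound_below hK
  set T' : ↥O →L[ℂ] H := T.comp O.subtypeL with hT'
  have hbound' : ∀ z : ↥O, ‖z‖ ≤ (c⁻¹ : ℝ) * ‖T' z‖ := by
    intro z
    have h1 := hbound z z.2
    show ‖(z : H)‖ ≤ c⁻¹ * ‖(1 - K) (z : H)‖
    calc ‖(z:H)‖ = c⁻¹ * (c * ‖(z:H)‖) := by field_simp
      _ ≤ c⁻¹ * ‖(1 - K) (z:H)‖ := mul_le_mul_of_nonneg_left h1 (inv_pos.2 hc).le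
  have hanti : AntilipschitzWith (Real.toNNReal c⁻¹) ⇑T' := by
    apply T'.antilipschitz_of_bound
    intro x
    rw [Real.coe_toNNReal _ (le_of_lt (inv_pos.2 hc))]
    exact hbound' x
  have hinj : Function.Injective ⇑T' := hanti.injective
  set Msub : Submodule ℂ H := T'.range with hMsub
  have hMclosed : IsClosed (Msub : Set H) := by
    have : (Msub : Set H) = Set.range ⇑T' := by
      ext y; simp [hMsub, LinearMap.mem_range, Set.mem_range]
    rw [this]
    exact hanti.isClosed_range T'.uniformContinuous
  haveI : CompleteSpace ↥Msub := hMclosed.completeSpace_coe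
  set T'' : ↥O →L[ℂ] ↥Msub := T'.codRestrict Msub (fun z => LinearMap.mem_range_self _ z) with hT''
  have hker : T''.ker = ⊥ := by
    rw [Submodule.eq_bot_iff]
    intro z hz
    rw [LinearMap.mem_ker] at hz
    apply hinj
    have h1 : (T'' z : H) = 0 := by rw [show T'' z = 0 from hz]; rfl
    have h2 : T' 0 = 0 := map_zero _
    rw [h2]
    exact h1
  have hrange : T''.range = ⊤ := by
    rw [LinearMap.range_eq_top]
    rintro ⟨m, z, rfl⟩
    exact ⟨z, rfl⟩
  set e := ContinuousLinearEquiv.ofBijective T'' hker hrange with he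
  set R : H →L[ℂ] H :=
    O.subtypeL.comp ((e.symm : ↥Msub →L[ℂ] ↥O).comp (Submodule.orthogonalProjection Msub)) with hR
  set F : H →L[ℂ] H := (Msubᗮ).subtypeL.comp (Submodule.orthogonalProjection Msubᗮ) with hF
  have hTz : ∀ z : H, T z ∈ Msub := by
    intro z
    have hdec : (Submodule.orthogonalProjection E₀ z : H) + (Submodule.orthogonalProjection E₀ᗮ z : H) = z :=
        E₀.starProjection_add_starProjection_orthogonal z
    have hker0 : T ((Submodule.orthogonalProjection E₀ z : H)) = 0 := (Submodule.orthogonalProjection E₀ z).2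
    have : T z = T' (Submodule.orthogonalProjection O z) := by
      conv_lhs => rw [← hdec]
      rw [map_add, hker0, zero_add]
      rfl
    rw [this]
    exact LinearMap.mem_range_self _ _
  refine ⟨R, F, ?_, ?_⟩
  · ext x
    have hRx : (1 - K) (R x) = (T'' (e.symm (Submodule.orthogonalProjection Msub x)) : H) := rfl
    have he2 : T'' (e.symm (Submodule.orthogonalProjection Msub x)) = Submodule.orthogonalProjection Msub x := by
      have : ∀ w, e w = T'' w := fun w => rfl
      rw [← this]
      exact e.apply_symm_apply _
    have hdec : (Submodule.orthogonalProjection Msub x : H) + (Submodule.orthogonalProjection Msubᗮ x : H) = x :=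
        Msub.starProjection_add_starProjection_orthogonal x
    rw [ContinuousLinearMap.mul_apply, hRx, he2]
    have h7 : (1 - F) x = x - (Submodule.orthogonalProjection Msubᗮ x : H) := rfl
    rw [h7, eq_sub_iff_add_eq]
    exact hdec
  · -- finite rank representation of F
    have hMorth : Msubᗮ = (1 - adjoint K).ker := by
      have hadj : adjoint T = 1 - adjoint K := by
        rw [hT, map_sub]
        congr 1
        · ext y
          apply ext_inner_right ℂ
          intro w
          rw [adjoint_inner_left]
          simp
      ext x
      constructor
      · intro hx
        have hx' : ∀ z : H, (inner ℂ (T z) x : ℂ) = 0 := fun z => hx (T z) (hTz z)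
        have : adjoint T x = 0 := by
          apply ext_inner_left ℂ
          intro w
          rw [adjoint_inner_right]  -- might need different name
          simp [hx' w]
        rw [← hadj]
        exact this
      · intro hx
        have hx' : adjoint T x = 0 := by rw [hadj]; exact hx
        intro y hy
        obtain ⟨z, rfl⟩ := hy
        have h5 : (inner ℂ ((z:H)) (adjoint T x) : ℂ) = inner ℂ (T (z:H)) x :=
          adjoint_inner_right T _ _
        have h6 : (inner ℂ ((T' : ↥O →ₗ[ℂ] H) z) x : ℂ) = inner ℂ (T (z:H)) x := rfl
        rw [h6, ← h5, hx', inner_zero_right]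
    haveI hfin : FiniteDimensional ℂ ↥(Msubᗮ) := by
      rw [hMorth]
      exact finiteDimensional_ker_one_sub (isCompactOperator_adjoint hK)
    set b := stdOrthonormalBasis ℂ ↥(Msubᗮ) with hb
    refine ⟨_, fun i => ((b i : ↥(Msubᗮ)) : H), ?_⟩
    ext x
    have hproj : Submodule.orthogonalProjection Msubᗮ x = _ := b.orthogonalProjectionOnto_apply_eq_sum x
    have : F x = ((Submodule.orthogonalProjection Msubᗮ x : ↥(Msubᗮ)) : H) := rfl
    rw [this, hproj]
    push_cast
    rw [Finset.sum_apply]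
    exact Finset.sum_congr rfl (fun i _ => rfl)


section Separable

/-- An orthonormal family in a separable space has countable index type. -/
lemma orthonormal_countable_index {X : Type*} [NormedAddCommGroup X] [InnerProductSpace ℂ X]
    [TopologicalSpace.SeparableSpace X] {ι : Type*} {v : ι → X} (hv : Orthonormal ℂ v) :
    Countable ι := by
  obtain ⟨s, hsc, hsd⟩ := TopologicalSpace.exists_countable_dense X
  haveI := hsc.to_subtype
  have hchoice : ∀ i : ι, ∃ y : s, dist (v i) (y : X) < 1 / 2 := by
    intro i
    obtain ⟨y, hy1, hy2⟩ := Metric.dense_iff.1 hsd (v i) (1/2) (by norm_num)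
    exact ⟨⟨y, hy2⟩, by rwa [Metric.mem_ball, dist_comm] at hy1⟩
  choose f hf using hchoice
  have hinj : Function.Injective f := by
    intro i j hij
    by_contra hne
    have hsq : ‖v i - v j‖ ^ 2 = 2 := by
      have h1 : (inner ℂ (v i - v j) (v i - v j) : ℂ) = 2 := by
        rw [inner_sub_left, inner_sub_right, inner_sub_right, hv.2 hne, hv.2 (Ne.symm hne)]
        rw [inner_self_eq_norm_sq_to_K, inner_self_eq_norm_sq_to_K, hv.1 i, hv.1 j]
        norm_num
      have h2 := inner_self_eq_norm_sq (𝕜 := ℂ) (v i - v j)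
      rw [h1] at h2
      simpa using h2.symm
    have hlt : ‖v i - v j‖ < 1 := by
      calc ‖v i - v j‖ = dist (v i) (v j) := (dist_eq_norm _ _).symm
        _ ≤ dist (v i) (f i : X) + dist (f j : X) (v j) := by
            rw [hij]; exact dist_triangle _ _ _
        _ < 1/2 + 1/2 := add_lt_add (hf i) (by rw [dist_comm]; exact hf j)
        _ = 1 := by norm_num
    nlinarith [norm_nonneg (v i - v j)]
  exact Function.Injective.countable hinj

lemma exists_linearIsometryEquiv_lp (Z : Type*) [NormedAddCommGroup Z] [InnerProductSpace ℂ Z]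
    [CompleteSpace Z] [TopologicalSpace.SeparableSpace Z] (hZ : ¬FiniteDimensional ℂ Z) :
    Nonempty (Z ≃ₗᵢ[ℂ] (lp (fun _ : ℕ => ℂ) 2)) := by
    obtain ⟨w, b, hb⟩ := exists_hilbertBasis ℂ Z
    haveI : Countable ↥w := orthonormal_countable_index b.orthonormal
    haveI : Infinite ↥w := by
      rw [Set.infinite_coe_iff]
      intro hwfin
      apply hZ
      have hrange : Set.range ⇑b = w := by rw [hb]; exact Subtype.range_coe
      haveI hfd : FiniteDimensional ℂ ↥(Submodule.span ℂ (Set.range ⇑b)) :=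
        FiniteDimensional.span_of_finite ℂ (by rw [hrange]; exact hwfin)
      have hclosed : IsClosed ((Submodule.span ℂ (Set.range ⇑b)) : Set Z) :=
        Submodule.closed_of_finiteDimensional _
      have htop : Submodule.span ℂ (Set.range ⇑b) = ⊤ := by
        have h1 : (Submodule.span ℂ (Set.range ⇑b)).topologicalClosure ≤
            Submodule.span ℂ (Set.range ⇑b) :=
          Submodule.topologicalClosure_minimal _ le_rfl hclosed
        have h2 : (Submodule.span ℂ (Set.range ⇑b)).topologicalClosure = ⊤ := b.dense_span
        exact le_antisymm le_top (h2 ▸ h1)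
      rw [htop] at hfd
      exact Submodule.topEquiv.finiteDimensional
    have e : ℕ ≃ ↥w := by
      haveI : Encodable ↥w := Encodable.ofCountable ↥w
      haveI : Denumerable ↥w := Denumerable.ofEncodableOfInfinite ↥w
      exact (Denumerable.eqv ↥w).symm
    have horth : Orthonormal ℂ (fun n : ℕ => b (e n)) := b.orthonormal.comp e e.injective
    have hsp : ⊤ ≤ (Submodule.span ℂ (Set.range (fun n : ℕ => b (e n)))).topologicalClosure := by
      have hr : Set.range (fun n : ℕ => b (e n)) = Set.range ⇑b :=
        e.surjective.range_comp ⇑b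
      rw [hr]
      have h2 : (Submodule.span ℂ (Set.range ⇑b)).topologicalClosure = ⊤ := b.dense_span
      exact h2.ge
    exact ⟨(HilbertBasis.mk horth hsp).repr⟩

/-- Any two separable infinite-dimensional complex Hilbert spaces are isometrically isomorphic. -/
lemma exists_linearIsometryEquiv (X : Type*) (Y : Type*) [NormedAddCommGroup X]
    [InnerProductSpace ℂ X]
    [CompleteSpace X] [TopologicalSpace.SeparableSpace X] (hX : ¬FiniteDimensional ℂ X)
    [NormedAddCommGroup Y] [InnerProductSpace ℂ Y]
    [CompleteSpace Y] [TopologicalSpace.SeparableSpace Y] (hY : ¬FiniteDimensional ℂ Y) :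
    Nonempty (X ≃ₗᵢ[ℂ] Y) := by
  obtain ⟨eX⟩ := exists_linearIsometryEquiv_lp X hX
  obtain ⟨eY⟩ := exists_linearIsometryEquiv_lp Y hY
  exact ⟨eX.trans eY.symm⟩

end Separable

section CFCPart

noncomputable def hfun (δ t : ℝ) : ℝ := min 1 (max ((|t| - δ) / δ) 0)

lemma hfun_cont (δ : ℝ) : Continuous (hfun δ) := by
  unfold hfun
  fun_prop

lemma hfun_nonneg (δ t : ℝ) : 0 ≤ hfun δ t := le_min (by norm_num) (le_max_right _ _)

lemma hfun_le_one (δ t : ℝ) : hfun δ t ≤ 1 := min_le_left _ _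

lemma hfun_eq_zero {δ t : ℝ} (hδ : 0 < δ) (h : |t| ≤ δ) : hfun δ t = 0 := by
  unfold hfun
  rw [max_eq_right (div_nonpos_iff.2 (Or.inr ⟨sub_nonpos.2 h, hδ.le⟩)), min_eq_right (by norm_num)]

lemma hfun_eq_one {δ t : ℝ} (hδ : 0 < δ) (h : 2 * δ ≤ |t|) : hfun δ t = 1 := by
  unfold hfun
  rw [min_eq_left]
  refine le_trans ?_ (le_max_left _ _)
  rw [le_div_iff₀ hδ]
  linarith

lemma hfun_bound (δ : ℝ) (hδ : 0 < δ) (t : ℝ) : |t * (1 - hfun δ t)| ≤ 2 * δ := by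
  rcases le_or_gt (|t|) (2 * δ) with h | h
  · calc |t * (1 - hfun δ t)| = |t| * |1 - hfun δ t| := abs_mul _ _
      _ ≤ |t| * 1 := by
          apply mul_le_mul_of_nonneg_left _ (abs_nonneg t)
          rw [abs_le]
          constructor
          · linarith [hfun_le_one δ t]
          · linarith [hfun_nonneg δ t]
      _ ≤ 2 * δ := by rwa [mul_one]
  · rw [hfun_eq_one hδ h.le, sub_self, mul_zero, abs_zero]
    positivity

lemma hfun_half_mul {δ t : ℝ} (hδ : 0 < δ) : hfun (δ/2) t * hfun δ t = hfun δ t := by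
  rcases le_or_gt (|t|) δ with h | h
  · rw [hfun_eq_zero hδ h, mul_zero]
  · rw [hfun_eq_one (by linarith) (by rw [show 2 * (δ/2) = δ by ring]; exact h.le), one_mul]

noncomputable def gfun (δ t : ℝ) : ℝ := hfun (δ/2) t * t / max (t^2) ((δ/4)^2)

lemma gfun_cont {δ : ℝ} (hδ : 0 < δ) : Continuous (gfun δ) := by
  unfold gfun
  apply Continuous.div ((hfun_cont _).mul continuous_id)
  · fun_prop
  · intro t
    have : (0:ℝ) < (δ/4)^2 := by positivity
    have := le_max_right (t^2) ((δ/4)^2)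
    positivity

lemma gfun_mul {δ t : ℝ} (hδ : 0 < δ) : t * gfun δ t = hfun (δ/2) t := by
  unfold gfun
  rcases le_or_gt (|t|) (δ/2) with h | h
  · rw [hfun_eq_zero (by linarith) h]
    simp
  · have ht2 : max (t^2) ((δ/4)^2) = t^2 := by
      apply max_eq_left
      have h1 : (δ/4) ≤ |t| := by linarith
      calc (δ/4)^2 ≤ |t|^2 := by nlinarith
        _ = t^2 := sq_abs t
    rw [ht2]
    have ht0 : t ≠ 0 := by
      intro h0
      rw [h0, abs_zero] at h
      linarith
    field_simp

end CFCPart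

section OneMem

lemma exists_noncompact_cfc {P : H →L[ℂ] H} (hsa : IsSelfAdjoint P)
    (hnc : ¬IsCompactOperator ⇑P) :
    ∃ δ : ℝ, 0 < δ ∧ ¬IsCompactOperator ⇑(cfc (hfun δ) P) := by
  by_contra hcon
  push_neg at hcon
  apply hnc
  have hcpt : ∀ n : ℕ, IsCompactOperator ⇑(P * cfc (hfun (1/(n+1))) P) := by
    intro n
    have h1 : IsCompactOperator ⇑(cfc (hfun (1/((n:ℝ)+1))) P) := hcon _ (by positivity)
    have h2 : ⇑(P * cfc (hfun (1/((n:ℝ)+1))) P) = ⇑P ∘ ⇑(cfc (hfun (1/((n:ℝ)+1))) P) := rfl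
    rw [h2]
    exact h1.continuous_comp P.continuous
  have hnorm : ∀ n : ℕ, ‖P * cfc (hfun (1/((n:ℝ)+1))) P - P‖ ≤ 2 * (1/((n:ℝ)+1)) := by
    intro n
    set δ : ℝ := 1/((n:ℝ)+1) with hδdef
    have hδ : 0 < δ := by positivity
    have e1 : cfc (fun t : ℝ => t * hfun δ t) P = cfc (fun t : ℝ => t) P * cfc (hfun δ) P :=
      cfc_mul _ _ P (continuous_id.continuousOn) ((hfun_cont δ).continuousOn)
    have e2 : cfc (fun t : ℝ => t) P = P := cfc_id' ℝ P hsa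
    have e3 : cfc (fun t : ℝ => t * hfun δ t - t) P
        = cfc (fun t : ℝ => t * hfun δ t) P - cfc (fun t : ℝ => t) P :=
      cfc_sub _ _ P ((continuous_id.mul (hfun_cont δ)).continuousOn) continuous_id.continuousOn
    have e4 : P * cfc (hfun δ) P - P = cfc (fun t : ℝ => t * hfun δ t - t) P := by
      rw [e3, e1, e2]
    rw [e4]
    apply norm_cfc_le (by positivity)
    intro x _
    rw [Real.norm_eq_abs]
    have hb := hfun_bound δ hδ x
    have h2 : x * hfun δ x - x = -(x * (1 - hfun δ x)) := by ring
    rw [h2, abs_neg]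
    exact hb
  have htend : Filter.Tendsto (fun n : ℕ => P * cfc (hfun (1/((n:ℝ)+1))) P)
      Filter.atTop (nhds P) := by
    rw [tendsto_iff_norm_sub_tendsto_zero]
    apply squeeze_zero (fun n => norm_nonneg _) hnorm
    have h1 : Filter.Tendsto (fun n : ℕ => 1 / ((n:ℝ) + 1)) Filter.atTop (nhds 0) :=
      tendsto_one_div_add_atTop_nhds_zero_nat
    have := h1.const_mul (2:ℝ)
    simpa using this
  exact isCompactOperator_of_tendsto htend (Filter.Eventually.of_forall hcpt)

lemma one_mem_of_noncompact
    {J : Set (H →L[ℂ] H)}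
    (hJ0 : 0 ∈ J) (hJadd : ∀ x ∈ J, ∀ y ∈ J, x + y ∈ J)
    (hJl : ∀ (A : H →L[ℂ] H), ∀ x ∈ J, A * x ∈ J)
    (hJr : ∀ (A : H →L[ℂ] H), ∀ x ∈ J, x * A ∈ J)
    (hinf : ¬FiniteDimensional ℂ H)
    {B₀ : H →L[ℂ] H} (hB₀ : B₀ ∈ J) (hnc : ¬IsCompactOperator ⇑B₀) :
    (1 : H →L[ℂ] H) ∈ J := by
  classical
  set P : H →L[ℂ] H := ContinuousLinearMap.adjoint B₀ * B₀ with hP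
  have hPJ : P ∈ J := hJl _ _ hB₀
  have hsa : IsSelfAdjoint P := by
    rw [IsSelfAdjoint, star_mul, ContinuousLinearMap.star_eq_adjoint,
      ContinuousLinearMap.star_eq_adjoint, ContinuousLinearMap.adjoint_adjoint]
  have hPnc : ¬IsCompactOperator ⇑P := fun h => hnc (isCompactOperator_of_adjoint_mul_self h)
  obtain ⟨δ, hδ, hQ'nc⟩ := exists_noncompact_cfc hsa hPnc
  set Q' : H →L[ℂ] H := cfc (hfun δ) P with hQ'
  set Q : H →L[ℂ] H := cfc (hfun (δ/2)) P with hQ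
  have hQQ' : Q * Q' = Q' := by
    rw [hQ, hQ', ← cfc_mul _ _ P ((hfun_cont _).continuousOn) ((hfun_cont _).continuousOn)]
    congr 1
    funext t
    exact hfun_half_mul hδ
  have hQJ : Q ∈ J := by
    have e1 : cfc (fun t : ℝ => t * gfun δ t) P = cfc (fun t : ℝ => t) P * cfc (gfun δ) P :=
      cfc_mul _ _ P (continuous_id.continuousOn) ((gfun_cont hδ).continuousOn)
    have e2 : cfc (fun t : ℝ => t) P = P := cfc_id' ℝ P hsa
    have e3 : Q = cfc (fun t : ℝ => t * gfun δ t) P := by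
      rw [hQ]
      congr 1
      funext t
      exact (gfun_mul hδ).symm
    rw [e3, e1, e2]
    exact hJr _ _ hPJ
  -- the subspace on which Q acts as the identity
  set W : Submodule ℂ H := (Q'.range).topologicalClosure with hW
  have hWclosed : IsClosed (W : Set H) := Submodule.isClosed_topologicalClosure _
  have hQW : ∀ x ∈ W, Q x = x := by
    have hle : (Q'.range).topologicalClosure ≤ (Q - 1).ker := by
      apply Submodule.topologicalClosure_minimal
      · rintro _ ⟨y, rfl⟩
        rw [LinearMap.mem_ker]
        change (Q - 1) (Q' y) = 0
        have : (Q * Q') y = Q' y := by rw [hQQ']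
        rw [ContinuousLinearMap.sub_apply, ContinuousLinearMap.one_apply]
        rw [ContinuousLinearMap.mul_apply] at this
        rw [this, sub_self]
      · exact isClosed_ker _
    intro x hx
    have := hle hx
    rw [LinearMap.mem_ker] at this
    change (Q - 1) x = 0 at this
    rw [ContinuousLinearMap.sub_apply, ContinuousLinearMap.one_apply,
      sub_eq_zero] at this
    exact this
  have hWinf : ¬FiniteDimensional ℂ ↥W := by
    intro hfin
    apply hQ'nc
    exact isCompactOperator_of_mem_finiteDimensional (fun x => Submodule.le_topologicalClosure _ (LinearMap.mem_range_self _ x))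
  haveI : CompleteSpace ↥W := hWclosed.completeSpace_coe
  haveI : TopologicalSpace.SeparableSpace ↥W := by
    haveI : SecondCountableTopology H := UniformSpace.secondCountable_of_separable H
    exact TopologicalSpace.SecondCountableTopology.to_separableSpace
  obtain ⟨U⟩ := exists_linearIsometryEquiv H ↥W hinf hWinf
  set V : H →L[ℂ] H := W.subtypeL.comp U.toLinearIsometry.toContinuousLinearMap with hV
  have hVW : ∀ x, V x ∈ W := fun x => (U x).2
  have hQV : ∀ x, Q (V x) = V x := fun x => hQW _ (hVW x)
  have hadjV : ∀ x, ContinuousLinearMap.adjoint V (V x) = x := by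
    intro x
    apply ext_inner_right ℂ
    intro y
    rw [ContinuousLinearMap.adjoint_inner_left]
    have h3 : (inner ℂ (V x) (V y) : ℂ) = inner ℂ (U x) (U y) := rfl
    rw [h3, U.inner_map_map]
  have hone : ContinuousLinearMap.adjoint V * Q * V = 1 := by
    ext x
    rw [ContinuousLinearMap.mul_apply, ContinuousLinearMap.mul_apply]
    rw [hQV x, hadjV x, ContinuousLinearMap.one_apply]
  rw [← hone]
  exact hJr _ _ (hJl _ _ hQJ)

end OneMem



section Assembly

variable {J : Set (H →L[ℂ] H)} {S : H →L[ℂ] H}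

lemma sum_mem_J (hJ : IsBHIdeal J) {ι : Type*} (s : Finset ι) (f : ι → H →L[ℂ] H)
    (hf : ∀ i ∈ s, f i ∈ J) : ∑ i ∈ s, f i ∈ J := by
  classical
  induction s using Finset.induction_on with
  | empty => simpa using hJ.1
  | insert _ _ hns ih =>
      rw [Finset.sum_insert hns]
      exact hJ.2.1 _ (hf _ (Finset.mem_insert_self _ _)) _
        (ih fun i hi => hf i (Finset.mem_insert_of_mem hi))

lemma conj_ASB_mem (hJ : IsBHIdeal J) {A B : H →L[ℂ] H} (hA : A ∈ J) (hB : B ∈ J)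
    (X Y : H →L[ℂ] H) : X * (A * S * B) * Y ∈ NSub J S := by
  have h : X * (A * S * B) * Y = (X * A) * S * (B * Y) := by noncomm_ring
  rw [h]
  exact ASB_mem (hJ.2.2.1 X A hA) (hJ.2.2.2 Y B hB)

lemma key_mul_mem (hJ : IsBHIdeal J) (hinf : ¬FiniteDimensional ℂ H) (hS : S ∈ J)
    (hmem : S ∈ principalN J S) (T : H →L[ℂ] H) :
    T * S ∈ NSub J S ∧ S * T ∈ NSub J S := by
  classical
  by_cases hS0 : S = 0
  · constructor
    · rw [hS0, mul_zero]; exact Submodule.zero_mem _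
    · rw [hS0, zero_mul]; exact Submodule.zero_mem _
  by_cases hone : (1 : H →L[ℂ] H) ∈ J
  · have hTJ : T ∈ J := by have := hJ.2.2.1 T 1 hone; rwa [mul_one] at this
    exact ⟨AS_mem hTJ, SB_mem hTJ⟩
  have hcpt : ∀ A ∈ J, IsCompactOperator ⇑A := by
    intro A hA
    by_contra h
    exact hone (one_mem_of_noncompact hJ.1 hJ.2.1 hJ.2.2.1 hJ.2.2.2 hinf hA h)
  obtain ⟨A₀, hA₀, B₀, hB₀, m, A', B', hA', hB', hSrep⟩ := hmem
  obtain ⟨R₂, F₂, hR₂, n₂, u₂, hF₂⟩ := fredholm_regularizer (hcpt B₀ hB₀)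
  obtain ⟨R₁', F₁', hR₁', n₁, u₁, hF₁'⟩ :=
    fredholm_regularizer (isCompactOperator_adjoint (hcpt A₀ hA₀))
  set R₁ := adjoint R₁' with hR₁def
  set F₁ := adjoint F₁' with hF₁def
  have hR₁ : R₁ * (1 - A₀) = 1 - F₁ := by
    have h0 := congrArg (fun X : H →L[ℂ] H => star X) hR₁'
    simp only [star_mul, star_sub, star_one, star_eq_adjoint, adjoint_adjoint] at h0
    exact h0
  have hF₁ : F₁ = ∑ i, rankOne (u₁ i) (u₁ i) := by
    rw [hF₁def, hF₁', map_sum]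
    exact Finset.sum_congr rfl (fun i _ => adjoint_rankOne _ _)
  have hF₂J : F₂ ∈ J := by
    rw [hF₂]; exact sum_mem_J hJ _ _ (fun i _ => rankOne_mem_J hJ hS hS0 _ _)
  have hF₁J : F₁ ∈ J := by
    rw [hF₁]; exact sum_mem_J hJ _ _ (fun i _ => rankOne_mem_J hJ hS hS0 _ _)
  set Kp := (∑ i, A' i * S * B' i) + A₀ * S * B₀ with hKp
  have hK' : (1 - A₀) * S * (1 - B₀) = Kp := by
    have e : (1 - A₀) * S * (1 - B₀) = (S - A₀ * S - S * B₀) + A₀ * S * B₀ := by noncomm_ring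
    have e2 : S - A₀ * S - S * B₀ = ∑ i, A' i * S * B' i := by
      rw [sub_sub, sub_eq_iff_eq_add]
      conv_lhs => rw [hSrep]
      abel
    rw [e, e2, hKp]
  have hmaster : S = F₁ * S + S * F₂ - F₁ * S * F₂ + R₁ * Kp * R₂ := by
    have h1 : (1 - F₁) * S * (1 - F₂) = R₁ * ((1 - A₀) * S * (1 - B₀)) * R₂ := by
      have hl : (1 - F₁) * S = R₁ * ((1 - A₀) * S) := by rw [← hR₁]; noncomm_ring
      have hr : ((1 - A₀) * S) * (1 - F₂) = ((1 - A₀) * S) * ((1 - B₀) * R₂) := by rw [← hR₂]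
      calc (1 - F₁) * S * (1 - F₂) = (R₁ * ((1 - A₀) * S)) * (1 - F₂) := by rw [hl]
        _ = R₁ * (((1 - A₀) * S) * (1 - F₂)) := by rw [mul_assoc]
        _ = R₁ * (((1 - A₀) * S) * ((1 - B₀) * R₂)) := by rw [hr]
        _ = R₁ * ((1 - A₀) * S * (1 - B₀)) * R₂ := by noncomm_ring
    rw [hK'] at h1
    have h2 : (1 - F₁) * S * (1 - F₂) = S - F₁ * S - S * F₂ + F₁ * S * F₂ := by noncomm_ring
    rw [h2] at h1
    rw [← h1]
    abel
  have hconj : ∀ X Y : H →L[ℂ] H, X * Kp * Y ∈ NSub J S := by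
    intro X Y
    rw [hKp]
    have e : X * ((∑ i, A' i * S * B' i) + A₀ * S * B₀) * Y
        = (∑ i, X * (A' i * S * B' i) * Y) + X * (A₀ * S * B₀) * Y := by
      rw [mul_add, add_mul, Finset.mul_sum, Finset.sum_mul]
    rw [e]
    exact add_mem (Submodule.sum_mem _ fun i _ => conj_ASB_mem hJ (hA' i) (hB' i) X Y)
      (conj_ASB_mem hJ hA₀ hB₀ X Y)
  constructor
  · have t1 : (T * F₁) * S ∈ NSub J S := AS_mem (hJ.2.2.1 T F₁ hF₁J)
    have t2 : T * (S * F₂) ∈ NSub J S := by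
      rw [hF₂, Finset.mul_sum, Finset.mul_sum]
      refine Submodule.sum_mem _ fun i _ => ?_
      rw [comp_rankOne, comp_rankOne]
      exact rankOne_mem_NSub hJ hS hS0 _ _
    have t3 : (T * F₁) * S * F₂ ∈ NSub J S := ASB_mem (hJ.2.2.1 T F₁ hF₁J) hF₂J
    have t4 : (T * R₁) * Kp * R₂ ∈ NSub J S := hconj _ _
    have expand : T * S
        = (T * F₁) * S + T * (S * F₂) - (T * F₁) * S * F₂ + (T * R₁) * Kp * R₂ := by
      conv_lhs => rw [hmaster]
      noncomm_ring
    rw [expand]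
    exact add_mem (sub_mem (add_mem t1 t2) t3) t4
  · have s1 : F₁ * S * T ∈ NSub J S := by
      rw [hF₁, Finset.sum_mul, Finset.sum_mul]
      refine Submodule.sum_mem _ fun i _ => ?_
      rw [mul_assoc, rankOne_comp]
      exact rankOne_mem_NSub hJ hS hS0 _ _
    have s2 : S * (F₂ * T) ∈ NSub J S := SB_mem (hJ.2.2.2 T F₂ hF₂J)
    have s3 : F₁ * S * (F₂ * T) ∈ NSub J S := ASB_mem hF₁J (hJ.2.2.2 T F₂ hF₂J)
    have s4 : R₁ * Kp * (R₂ * T) ∈ NSub J S := hconj _ _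
    have expand : S * T
        = F₁ * S * T + S * (F₂ * T) - F₁ * S * (F₂ * T) + R₁ * Kp * (R₂ * T) := by
      conv_lhs => rw [hmaster]
      noncomm_ring
    rw [expand]
    exact add_mem (sub_mem (add_mem s1 s2) s3) s4

lemma NSub_mul_any (hJ : IsBHIdeal J) (hinf : ¬FiniteDimensional ℂ H) (hS : S ∈ J)
    (hmem : S ∈ principalN J S) (T X : H →L[ℂ] H) (hX : X ∈ NSub J S) :
    T * X ∈ NSub J S ∧ X * T ∈ NSub J S := by
  constructor
  · induction hX using Submodule.span_induction with
    | mem x hx =>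
        rcases hx with ((⟨A, hA, rfl⟩ | ⟨B, hB, rfl⟩) | ⟨A, hA, B, hB, rfl⟩)
        · rw [← mul_assoc]; exact AS_mem (hJ.2.2.1 T A hA)
        · rw [← mul_assoc]; exact NSub_mul_right hJ hB (key_mul_mem hJ hinf hS hmem T).1
        · rw [← mul_assoc, ← mul_assoc]; exact ASB_mem (hJ.2.2.1 T A hA) hB
    | zero => rw [mul_zero]; exact Submodule.zero_mem _
    | add x y _ _ hx hy => rw [mul_add]; exact add_mem hx hy
    | smul c x _ hx => rw [mul_smul_comm]; exact Submodule.smul_mem _ _ hx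
  · induction hX using Submodule.span_induction with
    | mem x hx =>
        rcases hx with ((⟨A, hA, rfl⟩ | ⟨B, hB, rfl⟩) | ⟨A, hA, B, hB, rfl⟩)
        · rw [mul_assoc]; exact NSub_mul_left hJ hA (key_mul_mem hJ hinf hS hmem T).2
        · rw [mul_assoc]; exact SB_mem (hJ.2.2.2 T B hB)
        · rw [mul_assoc, mul_assoc, ← mul_assoc S B T]
          exact ASB_mem hA (hJ.2.2.2 T B hB)
    | zero => rw [zero_mul]; exact Submodule.zero_mem _
    | add x y _ _ hx hy => rw [add_mul]; exact add_mem hx hy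
    | smul c x _ hx => rw [smul_mul_assoc]; exact Submodule.smul_mem _ _ hx

lemma isBHIdeal_of_mem (hJ : IsBHIdeal J) (hinf : ¬FiniteDimensional ℂ H) (hS : S ∈ J)
    (hmem : S ∈ NSub J S) : IsBHIdeal (subidealGen J {S}) := by
  rw [genEq hJ hS]
  have hmem' : S ∈ principalN J S := by rw [principalN_eq hJ]; exact hmem
  have hsub := isSubideal_Gset hJ hS
  refine ⟨hsub.2.1, hsub.2.2.1, ?_, ?_⟩
  · rintro T x ⟨α, X, hX, rfl⟩
    rw [principalN_eq hJ] at hX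
    refine (mem_Gset_iff hJ).2 ⟨0, α • (T * S) + T * X, ?_, by
      rw [mul_add, mul_smul_comm, zero_smul, zero_add]⟩
    exact add_mem (Submodule.smul_mem _ _ (key_mul_mem hJ hinf hS hmem' T).1)
      ((NSub_mul_any hJ hinf hS hmem' T X hX).1)
  · rintro T x ⟨α, X, hX, rfl⟩
    rw [principalN_eq hJ] at hX
    refine (mem_Gset_iff hJ).2 ⟨0, α • (S * T) + X * T, ?_, by
      rw [add_mul, smul_mul_assoc, zero_smul, zero_add]⟩
    exact add_mem (Submodule.smul_mem _ _ (key_mul_mem hJ hinf hS hmem' T).2)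
      ((NSub_mul_any hJ hinf hS hmem' T X hX).2)

end Assembly

end SubTrace

/-- when `(S)_J` is not a `B(H)`-ideal, `(S)_J = ℂS ⊕ N` and
`τ(αS + X) := α` is a well-defined subideal-trace on `(S)_J`. -/
theorem principal_subideal_trace (J : Set (H →L[ℂ] H)) (hJ : IsBHIdeal J)
    (hinf : ¬FiniteDimensional ℂ H) (S : H →L[ℂ] H) (hS : S ∈ J)
    (hnot : ¬IsBHIdeal (subidealGen J {S})) :
    (∀ (α β : ℂ) (X Y : H →L[ℂ] H), X ∈ principalN J S → Y ∈ principalN J S →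
        α • S + X = β • S + Y → α = β) ∧
      subidealGen J {S} = {T | ∃ (α : ℂ), ∃ X ∈ principalN J S, T = α • S + X} ∧
      ∃ τ : (H →L[ℂ] H) → ℂ,
        (∀ (α : ℂ), ∀ X ∈ principalN J S, τ (α • S + X) = α) ∧
        (∀ x ∈ subidealGen J {S}, ∀ y ∈ subidealGen J {S}, τ (x + y) = τ x + τ y) ∧
        (∀ (c : ℂ), ∀ x ∈ subidealGen J {S}, τ (c • x) = c * τ x) ∧
        (∀ Y ∈ subidealGen J {S}, ∀ U ∈ unitaryJ J, τ (U * Y * star U) = τ Y) := by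
  classical
  have hSN : S ∉ SubTrace.NSub J S := fun h => hnot (SubTrace.isBHIdeal_of_mem hJ hinf hS h)
  have huniq := SubTrace.uniqueness_of_not_mem hJ hSN
  have hgen : subidealGen J {S} = SubTrace.Gset J S := SubTrace.genEq hJ hS
  have hτs : ∀ (α : ℂ) (X : H →L[ℂ] H), X ∈ principalN J S →
      (if h : α • S + X ∈ SubTrace.Gset J S then h.choose else 0) = α := by
    intro α X hX
    have hm : α • S + X ∈ SubTrace.Gset J S := ⟨α, X, hX, rfl⟩
    rw [dif_pos hm]
    obtain ⟨Y, hY, hEq⟩ := hm.choose_spec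
    exact huniq _ _ _ _ hY hX hEq.symm
  refine ⟨huniq, hgen, fun T => if h : T ∈ SubTrace.Gset J S then h.choose else 0,
    hτs, ?_, ?_, ?_⟩
  · -- additivity
    intro x hx y hy
    rw [hgen] at hx hy
    obtain ⟨α, X, hX, rfl⟩ := hx
    obtain ⟨β, Y, hY, rfl⟩ := hy
    have hXY : X + Y ∈ principalN J S := by
      rw [SubTrace.principalN_eq hJ] at hX hY ⊢
      exact add_mem hX hY
    have e : (α • S + X) + (β • S + Y) = (α + β) • S + (X + Y) := by
      rw [add_smul]; abel
    dsimp only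
    rw [e, hτs _ _ hXY, hτs _ _ hX, hτs _ _ hY]
  · -- homogeneity
    intro c x hx
    rw [hgen] at hx
    obtain ⟨α, X, hX, rfl⟩ := hx
    have hcX : c • X ∈ principalN J S := by
      rw [SubTrace.principalN_eq hJ] at hX ⊢
      exact Submodule.smul_mem _ _ hX
    have e : c • (α • S + X) = (c * α) • S + c • X := by
      rw [smul_add, smul_smul]
    dsimp only
    rw [e, hτs _ _ hcX, hτs _ _ hX]
  · -- unitary invariance
    intro Y hY U hU
    rw [hgen] at hY
    obtain ⟨α, X, hX, rfl⟩ := hY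
    obtain ⟨hU1, hU2⟩ := hU
    have hXp := hX
    rw [SubTrace.principalN_eq hJ] at hX
    have hsU : star U - 1 ∈ J := by
      have h1 : star U * U = 1 := (Unitary.mem_iff.1 hU1).1
      have h2 : star U - 1 = -(star U * (U - 1)) := by
        rw [mul_sub, h1, mul_one, neg_sub]
      rw [h2]
      have h3 := hJ.2.2.1 (star U) _ hU2
      have h4 := SubTrace.smul_mem_J hJ (-1) h3
      rwa [neg_one_smul] at h4
    have gen_id : ∀ u s v : H →L[ℂ] H,
        u * s * v - s = (u - 1) * s + s * (v - 1) + (u - 1) * s * (v - 1) := by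
      intros; noncomm_ring
    have gen_id2 : ∀ u s v : H →L[ℂ] H,
        u * s * v = s + (u - 1) * s + s * (v - 1) + (u - 1) * s * (v - 1) := by
      intros; noncomm_ring
    have hZS : U * S * star U - S ∈ SubTrace.NSub J S := by
      rw [gen_id U S (star U)]
      exact add_mem (add_mem (SubTrace.AS_mem hU2) (SubTrace.SB_mem hsU))
        (SubTrace.ASB_mem hU2 hsU)
    have hXc : U * X * star U ∈ SubTrace.NSub J S := by
      rw [gen_id2 U X (star U)]
      refine add_mem (add_mem (add_mem hX (SubTrace.NSub_mul_left hJ hU2 hX))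
        (SubTrace.NSub_mul_right hJ hsU hX)) ?_
      rw [mul_assoc]
      exact SubTrace.NSub_mul_left hJ hU2 (SubTrace.NSub_mul_right hJ hsU hX)
    have hZmem : α • (U * S * star U - S) + U * X * star U ∈ principalN J S := by
      rw [SubTrace.principalN_eq hJ]
      exact add_mem (Submodule.smul_mem _ _ hZS) hXc
    have hZ : U * (α • S + X) * star U
        = α • S + (α • (U * S * star U - S) + U * X * star U) := by
      have e1 : U * (α • S + X) * star U = α • (U * S * star U) + U * X * star U := by
        rw [mul_add, add_mul, mul_smul_comm, smul_mul_assoc]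
      rw [e1, smul_sub]
      abel
    dsimp only
    rw [hZ, hτs _ _ hZmem, hτs _ _ hXp]
end

section
/- Let J be a nonzero B(H)-ideal and 𝓘 a nonzero J-ideal. Then 𝓘 contains every finite-rank operator: every T ∈ B(H) whose range is finite-dimensional belongs to 𝓘. -/
open Pointwise

variable {H : Type*} [NormedAddCommGroup H] [InnerProductSpace ℂ H] [CompleteSpace H]
  [TopologicalSpace.SeparableSpace H]

/-- every nonzero `J`-ideal contains all finite-rank operators. -/
theorem subideal_contains_finiteRank (J I : Set (H →L[ℂ] H)) (hJ : IsBHIdeal J)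
    (hinf : ¬FiniteDimensional ℂ H) (hI : IsSubideal J I)
    (hJne : ∃ x ∈ J, x ≠ 0) (hIne : ∃ x ∈ I, x ≠ 0) :
    ∀ T : H →L[ℂ] H, FiniteDimensional ℂ (LinearMap.range (T : H →ₗ[ℂ] H)) → T ∈ I := by
  classical
  obtain ⟨X, hXI, hX0⟩ := hIne
  obtain ⟨hsub, h0I, haddI, hsmulI, hmulI⟩ := hI
  obtain ⟨hJ0, hJadd, hJl, hJr⟩ := hJ
  -- pick `e` with `X e ≠ 0`
  have he : ∃ e : H, X e ≠ 0 := by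
    by_contra h
    push_neg at h
    exact hX0 (ContinuousLinearMap.ext fun x => by simpa using h x)
  obtain ⟨e, he⟩ := he
  -- factorization of a rank-one operator through `X`
  have factor : ∀ u v : H,
      ((((‖X e‖ : ℂ)^2)⁻¹ • ((innerSL ℂ (X e)).smulRight u)) * X *
        ((innerSL ℂ v).smulRight e)) = (innerSL ℂ v).smulRight u := by
    intro u v
    ext x
    simp only [ContinuousLinearMap.mul_apply, ContinuousLinearMap.smulRight_apply,
      innerSL_apply_apply, map_smul, inner_smul_right, ContinuousLinearMap.smul_apply, smul_smul]
    rw [inner_self_eq_norm_sq_to_K]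
    have hn : ((‖X e‖ : ℂ))^2 ≠ 0 := by simp [norm_eq_zero, he]
    field_simp
    congr 1
    exact mul_div_cancel_right₀ _ hn
  -- every rank-one operator belongs to `J`
  have hXJ : X ∈ J := hsub hXI
  have rank1J : ∀ u v : H, (innerSL ℂ v).smulRight u ∈ J := by
    intro u v
    rw [← factor u v]
    exact hJr _ _ (hJl _ _ hXJ)
  -- every rank-one operator belongs to `I`
  have rank1I : ∀ u v : H, (innerSL ℂ v).smulRight u ∈ I := by
    intro u v
    rw [← factor u v]
    have hA : (((‖X e‖ : ℂ)^2)⁻¹ • ((innerSL ℂ (X e)).smulRight u)) ∈ J := by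
      have : (((‖X e‖ : ℂ)^2)⁻¹ • ((innerSL ℂ (X e)).smulRight u))
          = ((((‖X e‖ : ℂ)^2)⁻¹ • (1 : H →L[ℂ] H)) * ((innerSL ℂ (X e)).smulRight u)) := by
        rw [smul_mul_assoc, one_mul]
      rw [this]
      exact hJl _ _ (rank1J u (X e))
    have hB : ((innerSL ℂ v).smulRight e) ∈ J := rank1J e v
    exact (hmulI _ hB _ ((hmulI _ hA _ hXI).1)).2
  -- decompose a finite-rank operator as a finite sum of rank-one operators
  intro T hT
  set b := stdOrthonormalBasis ℂ (LinearMap.range (T : H →ₗ[ℂ] H))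
  have hdecomp : T = ∑ i : Fin (Module.finrank ℂ (LinearMap.range (T : H →ₗ[ℂ] H))),
      (innerSL ℂ ((ContinuousLinearMap.adjoint T) ((b : _) i : H))).smulRight ((b : _) i : H) := by
    ext x
    have hx : T x ∈ LinearMap.range (T : H →ₗ[ℂ] H) := ⟨x, rfl⟩
    have h := congrArg (Subtype.val) (b.sum_repr ⟨T x, hx⟩)
    push_cast at h
    simp only [ContinuousLinearMap.sum_apply, ContinuousLinearMap.smulRight_apply,
      innerSL_apply_apply, ContinuousLinearMap.adjoint_inner_left]
    have key : ∀ i, (inner ℂ ((b i : H)) (T x) : ℂ) • (b i : H)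
        = b.repr ⟨T x, hx⟩ i • (b i : H) := by
      intro i
      congr 1
      exact (b.repr_apply_apply ⟨T x, hx⟩ i).symm
    simp_rw [key]
    exact h.symm
  rw [hdecomp]
  exact Finset.sum_induction _ (· ∈ I) (fun a b ha hb => haddI a ha b hb) h0I (fun i _ => rank1I _ _)
end
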